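/- Let x₀ > 0 and y₀ satisfy 0 < y₀ ≤ 1/√x₀. Then for every n, the Newton iterate y_n (defined by y_{i} = (1/2)·y_{i-1}·(3 - x₀·y_{i-1}²)) satisfies 0 < y_n ≤ 1/√x₀, and the sequence (y_n) is monotonically nondecreasing. -/
import Mathlib

lemma newton_invsqrt_step (x₀ : ℝ) (hx : 0 < x₀) (a : ℝ)
    (ha : 0 < a) (hle : a ≤ 1 / Real.sqrt x₀) :
    0 < (1 / 2) * a * (3 - x₀ * a ^ 2) ∧
      (1 / 2) * a * (3 - x₀ * a ^ 2) ≤ 1 / Real.sqrt x₀ ∧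
      a ≤ (1 / 2) * a * (3 - x₀ * a ^ 2) := by
  set s := Real.sqrt x₀ with hs
  have hspos : 0 < s := Real.sqrt_pos.mpr hx
  have hs2 : s ^ 2 = x₀ := Real.sq_sqrt hx.le
  have hsa : s * a ≤ 1 := by
    rw [le_div_iff₀ hspos] at hle
    linarith [hle]
  have hxa : x₀ * a ^ 2 ≤ 1 := by nlinarith [mul_nonneg hspos.le ha.le]
  refine ⟨by nlinarith, ?_, by nlinarith⟩
  rw [le_div_iff₀ hspos]
  nlinarith [sq_nonneg (s * a - 1), mul_pos hspos ha]

/-- For Newton's iteration for the inverse square root starting from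
`0 < y 0 ≤ 1/√x₀` with `x₀ > 0`: every iterate satisfies `0 < y n ≤ 1/√x₀`,
and the sequence is monotonically nondecreasing. -/
theorem newton_invsqrt_monotone (x₀ : ℝ) (hx : 0 < x₀) (y : ℕ → ℝ)
    (hy0_pos : 0 < y 0) (hy0_le : y 0 ≤ 1 / Real.sqrt x₀)
    (hrec : ∀ i, y (i + 1) = (1 / 2) * y i * (3 - x₀ * y i ^ 2)) :
    (∀ n, 0 < y n ∧ y n ≤ 1 / Real.sqrt x₀) ∧ Monotone y := by
  have key : ∀ n, 0 < y n ∧ y n ≤ 1 / Real.sqrt x₀ := by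
    intro n
    induction n with
    | zero => exact ⟨hy0_pos, hy0_le⟩
    | succ k ih =>
      obtain ⟨h1, h2, _⟩ := newton_invsqrt_step x₀ hx (y k) ih.1 ih.2
      rw [hrec k]; exact ⟨h1, h2⟩
  refine ⟨key, monotone_nat_of_le_succ fun n => ?_⟩
  obtain ⟨_, _, h3⟩ := newton_invsqrt_step x₀ hx (y n) (key n).1 (key n).2
  rw [hrec n]; exact h3
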